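/- Gaussian upper bound via comparison: let p ≥ 1, k > 0, and suppose U : (-∞, -M] → (0, ∞) is C¹, U and U' bounded, U(x) → 0 as x → -∞, |U'|^{p-2}U' differentiable with (|U'|^{p-2}U')' = V(x)^p U(x)^{p-1} where V(x) ≥ 2k|x| for x ≤ -M. If W(x) = C e^{-k x²} with C chosen so W(-M) = U(-M) and M is large enough that (|W'|^{p-2}W')' ≤ V^p W^{p-1} on (-∞, -M], then U(x) ≤ W(x) = C e^{-k x²} for all x ≤ -M. -/

import Mathlib

open Real Filter

lemma Faux_strictMono {p : ℝ} (hp : 1 < p) : StrictMono (fun t : ℝ => |t| ^ (p - 2) * t) := by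
  have hp1 : (0:ℝ) < p - 1 := by linarith
  have key : ∀ t : ℝ, 0 ≤ t → |t| ^ (p-2) * t = t ^ (p-1) := by
    intro t ht
    rcases eq_or_lt_of_le ht with h|h
    · rw [← h]; simp [Real.zero_rpow (by linarith : p - 1 ≠ 0)]
    · rw [abs_of_pos h, show p - 1 = (p-2) + 1 by ring, Real.rpow_add_one h.ne']
  intro s t hst
  simp only
  rcases le_or_gt 0 s with hs|hs
  · rw [key s hs, key t (le_trans hs hst.le)]
    exact Real.rpow_lt_rpow hs hst hp1
  · rcases le_or_gt 0 t with ht|ht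
    · have h1 : |s| ^ (p-2) * s < 0 :=
        mul_neg_of_pos_of_neg (Real.rpow_pos_of_pos (abs_pos.mpr hs.ne) _) hs
      have h2 : 0 ≤ |t| ^ (p-2) * t := by
        rw [key t ht]; exact Real.rpow_nonneg ht _
      linarith
    · have e : ∀ u : ℝ, u < 0 → |u| ^ (p-2) * u = -(|u| ^ (p-1)) := by
        intro u hu
        rw [show p - 1 = (p-2) + 1 by ring, Real.rpow_add_one (abs_ne_zero.mpr hu.ne),
          abs_of_neg hu]
        ring
      rw [e s hs, e t ht, neg_lt_neg_iff]
      exact Real.rpow_lt_rpow (abs_nonneg t)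
        (by rw [abs_of_neg hs, abs_of_neg ht]; linarith) hp1

noncomputable def gaussW (k C : ℝ) : ℝ → ℝ := fun t => C * Real.exp (-(k * t ^ 2))

noncomputable def gaussWd (k C : ℝ) : ℝ → ℝ :=
  fun t => C * Real.exp (-(k * t ^ 2)) * (-(2 * k * t))

lemma gauss_hasDerivAt (k C : ℝ) (y : ℝ) : HasDerivAt (gaussW k C) (gaussWd k C y) y := by
  have h1 : HasDerivAt (fun t : ℝ => -(k * t ^ 2)) (-(2 * k * y)) y := by
    have := ((hasDerivAt_pow 2 y).const_mul k).neg
    refine this.congr_deriv ?_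
    push_cast; ring
  have h2 := (Real.hasDerivAt_exp (-(k * y ^ 2))).comp y h1
  have h3 := h2.const_mul C
  refine h3.congr_deriv ?_
  show _ = C * Real.exp (-(k * y ^ 2)) * (-(2 * k * y))
  ring

lemma gauss_tendsto (k C : ℝ) (hk : 0 < k) :
    Tendsto (gaussW k C) atBot (nhds 0) := by
  have h1 : Tendsto (fun t : ℝ => t ^ 2) atBot atTop := by
    have h := (tendsto_pow_atTop (n := 2) (by norm_num)).comp
      (tendsto_abs_atBot_atTop : Tendsto (fun x : ℝ => |x|) atBot atTop)
    refine h.congr fun t => ?_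
    simp [Function.comp, sq_abs]
  have h2 : Tendsto (fun t : ℝ => -(k * t ^ 2)) atBot atBot :=
    tendsto_neg_atTop_atBot.comp (h1.const_mul_atTop hk)
  have h3 : Tendsto (fun t : ℝ => Real.exp (-(k * t ^ 2))) atBot (nhds 0) :=
    Real.tendsto_exp_atBot.comp h2
  have := h3.const_mul C
  rw [mul_zero] at this
  exact this

lemma gaussWd_differentiable (k C : ℝ) : Differentiable ℝ (gaussWd k C) := by
  show Differentiable ℝ fun t : ℝ => C * Real.exp (-(k * t ^ 2)) * (-(2 * k * t))
  fun_prop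

lemma gaussWd_pos (k C : ℝ) (hk : 0 < k) (hC : 0 < C) {z : ℝ} (hz : z < 0) :
    0 < gaussWd k C z :=
  mul_pos (mul_pos hC (Real.exp_pos _)) (by nlinarith)

lemma FW_diff (p k C : ℝ) (hk : 0 < k) (hC : 0 < C) {y : ℝ} (hy : y < 0) :
    DifferentiableAt ℝ (fun z => |gaussWd k C z| ^ (p - 2) * gaussWd k C z) y := by
  have hdiff : DifferentiableAt ℝ (fun z => gaussWd k C z ^ (p - 1)) y :=
    DifferentiableAt.rpow_const ((gaussWd_differentiable k C) y)
      (Or.inl (gaussWd_pos k C hk hC hy).ne')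
  apply hdiff.congr_of_eventuallyEq
  filter_upwards [Iio_mem_nhds hy] with z hz
  have hzpos : 0 < gaussWd k C z := gaussWd_pos k C hk hC hz
  rw [abs_of_pos hzpos, ← Real.rpow_add_one hzpos.ne', show p - 2 + 1 = p - 1 by ring]

theorem stmt11 (p k M C : ℝ) (hp : 1 ≤ p) (hk : 0 < k) (hM : 0 < M) (hC : 0 < C)
    (U V : ℝ → ℝ)
    (hUpos : ∀ x ≤ -M, 0 < U x)
    (hUbdd : ∃ B, ∀ x ≤ -M, |U x| ≤ B ∧ |deriv U x| ≤ B)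
    (hUC1 : ∀ x ≤ -M, DifferentiableAt ℝ U x)
    (hUlim : Tendsto U atBot (nhds 0))
    (hode : ∀ x ≤ -M, HasDerivAt (fun y => |deriv U y| ^ (p - 2) * deriv U y)
      (V x ^ p * U x ^ (p - 1)) x)
    (hV : ∀ x ≤ -M, 2 * k * |x| ≤ V x)
    (hmatch : C * Real.exp (-(k * M ^ 2)) = U (-M))
    (hsup : ∀ x ≤ -M,
      deriv (fun y => |deriv (fun t : ℝ => C * Real.exp (-(k * t ^ 2))) y| ^ (p - 2) *
          deriv (fun t : ℝ => C * Real.exp (-(k * t ^ 2))) y) x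
        ≤ V x ^ p * (C * Real.exp (-(k * x ^ 2))) ^ (p - 1)) :
    ∀ x ≤ -M, U x ≤ C * Real.exp (-(k * x ^ 2)) := by
  have hWd : ∀ y, HasDerivAt (gaussW k C) (gaussWd k C y) y := gauss_hasDerivAt k C
  have hWpos : ∀ y : ℝ, 0 < gaussW k C y := fun y => mul_pos hC (Real.exp_pos _)
  have hMneg : (-M : ℝ) < 0 := by linarith
  have hm0 : U (-M) - gaussW k C (-M) = 0 := by
    have e : gaussW k C (-M) = C * Real.exp (-(k * M ^ 2)) := by
      show C * Real.exp (-(k * (-M) ^ 2)) = _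
      rw [show ((-M : ℝ)) ^ 2 = M ^ 2 by ring]
    rw [e, hmatch, sub_self]
  rcases eq_or_lt_of_le hp with hpe | hp1
  · -- p = 1 : hypotheses are contradictory
    exfalso
    have hg : ∀ y : ℝ, |(|deriv U y| ^ (p - 2) * deriv U y)| ≤ 1 := by
      intro y
      by_cases hy : deriv U y = 0
      · simp [hy]
      · have h1 : |(|deriv U y| ^ (p - 2) * deriv U y)|
            = |deriv U y| ^ (p - 2) * |deriv U y| := by
          rw [abs_mul, abs_of_nonneg (Real.rpow_nonneg (abs_nonneg _) _)]
        rw [h1, ← Real.rpow_add_one (abs_ne_zero.mpr hy),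
          show p - 2 + 1 = (0:ℝ) by rw [← hpe]; norm_num, Real.rpow_zero]
    have hode1 : ∀ x ≤ -M, HasDerivAt (fun y => |deriv U y| ^ (p - 2) * deriv U y) (V x) x := by
      intro x hx
      have h := hode x hx
      have e1 : V x ^ p * U x ^ (p - 1) = V x := by
        rw [← hpe, Real.rpow_one, show (1:ℝ) - 1 = 0 by norm_num, Real.rpow_zero, mul_one]
      rwa [e1] at h
    set c : ℝ := 2 * k * M with hc
    have hcpos : 0 < c := by positivity
    set a : ℝ := -M - 3 / c - 1 with ha
    have haM : a ≤ -M := by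
      have : 0 < 3 / c := by positivity
      rw [ha]; linarith
    have hmono : MonotoneOn
        (fun y => (|deriv U y| ^ (p - 2) * deriv U y) - c * y) (Set.Icc a (-M)) := by
      have hlin : ∀ y : ℝ, HasDerivAt (fun y : ℝ => c * y) (c * 1) y := fun y =>
        (hasDerivAt_id y).const_mul c
      apply monotoneOn_of_deriv_nonneg (convex_Icc a (-M))
      · intro y hy
        exact (((hode1 y hy.2).sub (hlin y)).continuousAt).continuousWithinAt
      · intro y hy
        rw [interior_Icc] at hy
        exact (((hode1 y hy.2.le).sub (hlin y)).differentiableAt).differentiableWithinAt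
      · intro y hy
        rw [interior_Icc] at hy
        have hD := ((hode1 y hy.2.le).sub (hlin y)).deriv
        erw [hD]
        have h2 := hV y hy.2.le
        have hy0 : y < 0 := by linarith [hy.2]
        rw [abs_of_neg hy0] at h2
        have h3 : c ≤ V y := by
          rw [hc]; nlinarith [hy.2]
        simp only [mul_one]
        linarith
    have h1 := hmono (Set.left_mem_Icc.mpr haM) (Set.right_mem_Icc.mpr haM) haM
    simp only at h1
    have h2 := abs_le.mp (hg a)
    have h3 := abs_le.mp (hg (-M))
    have h4 : c * (-M) - c * a = 3 + c := by
      rw [ha]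
      field_simp
      ring
    linarith
  · -- main case 1 < p
    have hp1' : (0:ℝ) < p - 1 := by linarith
    by_contra hcon
    push_neg at hcon
    obtain ⟨x1, hx1M, hx1⟩ := hcon
    have hx1' : gaussW k C x1 < U x1 := hx1
    have hx1pos : 0 < U x1 - gaussW k C x1 := sub_pos.mpr hx1'
    have hlimh : Tendsto (fun y => U y - gaussW k C y) atBot (nhds 0) := by
      have := hUlim.sub (gauss_tendsto k C hk)
      simpa using this
    obtain ⟨a0, ha0⟩ := eventually_atBot.mp (hlimh.eventually (eventually_lt_nhds hx1pos))
    set a : ℝ := min a0 (x1 - 1) with hadef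
    have haa : ∀ y ≤ a, U y - gaussW k C y < U x1 - gaussW k C x1 :=
      fun y hy => ha0 y (le_trans hy (min_le_left _ _))
    have hax1 : a < x1 := lt_of_le_of_lt (min_le_right _ _) (by linarith)
    have hx1ltM : x1 < -M := by
      rcases lt_or_eq_of_le hx1M with h|h
      · exact h
      · exfalso; rw [h] at hx1pos; linarith
    have haM : a ≤ -M := by linarith
    have hcont : ContinuousOn (fun y => U y - gaussW k C y) (Set.Icc a (-M)) := by
      intro y hy
      exact (((hUC1 y hy.2).sub (hWd y).differentiableAt).continuousAt).continuousWithinAt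
    obtain ⟨x0, hx0mem, hx0max⟩ :=
      isCompact_Icc.exists_isMaxOn (Set.nonempty_Icc.mpr haM) hcont
    have hx1mem : x1 ∈ Set.Icc a (-M) := ⟨hax1.le, hx1ltM.le⟩
    have hx0ge : U x1 - gaussW k C x1 ≤ U x0 - gaussW k C x0 := hx0max hx1mem
    have hx0pos : 0 < U x0 - gaussW k C x0 := lt_of_lt_of_le hx1pos hx0ge
    have hx0a : a < x0 := by
      rcases lt_or_eq_of_le hx0mem.1 with h|h
      · exact h
      · exfalso
        have h2 := haa a le_rfl
        rw [h] at h2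
        linarith
    have hx0M : x0 < -M := by
      rcases lt_or_eq_of_le hx0mem.2 with h|h
      · exact h
      · exfalso; rw [h] at hx0pos; linarith
    have hlmax : IsLocalMax (fun y => U y - gaussW k C y) x0 :=
      hx0max.isLocalMax (Icc_mem_nhds hx0a hx0M)
    have hd0 : deriv U x0 = gaussWd k C x0 := by
      have hD : HasDerivAt (fun y => U y - gaussW k C y)
          (deriv U x0 - gaussWd k C x0) x0 :=
        ((hUC1 x0 hx0M.le).hasDerivAt).sub (hWd x0)
      have hz := hlmax.deriv_eq_zero
      rw [hD.deriv] at hz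
      linarith
    -- rewrite hsup in terms of gaussWd
    have ederiv : deriv (fun t : ℝ => C * Real.exp (-(k * t ^ 2))) = gaussWd k C :=
      funext fun y => (hWd y).deriv
    simp only [ederiv] at hsup
    -- first zero of U - W to the right of x0
    set S : Set ℝ := Set.Icc x0 (-M) ∩ (fun y => U y - gaussW k C y) ⁻¹' {0} with hSdef
    have hScl : IsClosed S :=
      (hcont.mono (Set.Icc_subset_Icc_left hx0a.le)).preimage_isClosed_of_isClosed
        isClosed_Icc isClosed_singleton
    have hMS : (-M) ∈ S := ⟨⟨hx0M.le, le_rfl⟩, by simpa using hm0⟩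
    have hSbdd : BddBelow S := ⟨x0, fun y hy => hy.1.1⟩
    set x2 : ℝ := sInf S with hx2def
    have hx2S : x2 ∈ S := hScl.csInf_mem ⟨-M, hMS⟩ hSbdd
    have hx2zero : U x2 - gaussW k C x2 = 0 := by
      have := hx2S.2
      simpa using this
    have hx2mem : x2 ∈ Set.Icc x0 (-M) := hx2S.1
    have hx0x2 : x0 < x2 :=
      lt_of_le_of_ne hx2mem.1 (fun e => by rw [← e] at hx2zero; linarith)
    have hnn : ∀ y ∈ Set.Icc x0 x2, 0 ≤ U y - gaussW k C y := by
      intro y hy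
      by_contra hneg
      push_neg at hneg
      have hyx2 : y < x2 :=
        lt_of_le_of_ne hy.2 (fun e => by rw [e, hx2zero] at hneg; linarith)
      have hsub : Set.Icc x0 y ⊆ Set.Icc a (-M) :=
        Set.Icc_subset_Icc hx0mem.1 (le_trans hy.2 hx2mem.2)
      have hiv := intermediate_value_Icc' hy.1 (hcont.mono hsub)
      have h0mem : (0:ℝ) ∈ Set.Icc (U y - gaussW k C y) (U x0 - gaussW k C x0) :=
        ⟨hneg.le, hx0pos.le⟩
      obtain ⟨z, hzmem, hz0⟩ := hiv h0mem
      have hzS : z ∈ S :=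
        ⟨⟨hzmem.1, le_trans (le_trans hzmem.2 hy.2) hx2mem.2⟩, by simpa using hz0⟩
      have hle := csInf_le hSbdd hzS
      have := hzmem.2
      linarith
    have hIccsub : Set.Icc x0 x2 ⊆ Set.Icc a (-M) := Set.Icc_subset_Icc hx0mem.1 hx2mem.2
    have hFWd : ∀ y : ℝ, y < 0 → DifferentiableAt ℝ
        (fun z => |gaussWd k C z| ^ (p - 2) * gaussWd k C z) y :=
      fun y hy => FW_diff p k C hk hC hy
    have hΦmono : MonotoneOn (fun y => (|deriv U y| ^ (p - 2) * deriv U y)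
        - (|gaussWd k C y| ^ (p - 2) * gaussWd k C y)) (Set.Icc x0 x2) := by
      apply monotoneOn_of_deriv_nonneg (convex_Icc _ _)
      · intro y hy
        have hyM : y ≤ -M := le_trans hy.2 hx2mem.2
        exact (((hode y hyM).continuousAt).sub
          ((hFWd y (by linarith)).continuousAt)).continuousWithinAt
      · intro y hy
        rw [interior_Icc] at hy
        have hyM : y ≤ -M := le_trans hy.2.le hx2mem.2
        exact (((hode y hyM).differentiableAt).sub (hFWd y (by linarith))).differentiableWithinAt
      · intro y hy
        rw [interior_Icc] at hy
        have hyM : y ≤ -M := le_trans hy.2.le hx2mem.2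
        have hy0 : y < 0 := by linarith
        have hD := ((hode y hyM).sub ((hFWd y hy0).hasDerivAt)).deriv
        erw [hD]
        have hs := hsup y hyM
        have hWley : gaussW k C y ≤ U y := by
          have := hnn y ⟨hy.1.le, hy.2.le⟩; linarith
        have hrle : (C * Real.exp (-(k * y ^ 2))) ^ (p - 1) ≤ U y ^ (p - 1) :=
          Real.rpow_le_rpow (le_of_lt (hWpos y)) hWley (by linarith)
        have hVnn : 0 ≤ V y ^ p :=
          Real.rpow_nonneg (le_trans (by positivity) (hV y hyM)) p
        have hmul := mul_le_mul_of_nonneg_left hrle hVnn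
        linarith
    have hΦ0 : (|deriv U x0| ^ (p - 2) * deriv U x0)
        - (|gaussWd k C x0| ^ (p - 2) * gaussWd k C x0) = 0 := by
      rw [hd0, sub_self]
    have hUW' : ∀ y ∈ Set.Icc x0 x2, gaussWd k C y ≤ deriv U y := by
      intro y hy
      have h1 := hΦmono (Set.left_mem_Icc.mpr hx0x2.le) hy hy.1
      simp only at h1
      rw [hΦ0] at h1
      have h2 : |gaussWd k C y| ^ (p - 2) * gaussWd k C y
          ≤ |deriv U y| ^ (p - 2) * deriv U y := by linarith
      exact (Faux_strictMono hp1).le_iff_le.mp h2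
    have hhmono : MonotoneOn (fun y => U y - gaussW k C y) (Set.Icc x0 x2) := by
      apply monotoneOn_of_deriv_nonneg (convex_Icc _ _)
      · exact hcont.mono hIccsub
      · intro y hy
        rw [interior_Icc] at hy
        exact ((hUC1 y (le_trans hy.2.le hx2mem.2)).sub
          (hWd y).differentiableAt).differentiableWithinAt
      · intro y hy
        rw [interior_Icc] at hy
        have hD := (((hUC1 y (le_trans hy.2.le hx2mem.2)).hasDerivAt).sub (hWd y)).deriv
        erw [hD]
        have := hUW' y ⟨hy.1.le, hy.2.le⟩
        linarith
    have hfin := hhmono (Set.left_mem_Icc.mpr hx0x2.le) (Set.right_mem_Icc.mpr hx0x2.le) hx0x2.le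
    simp only at hfin
    rw [hx2zero] at hfin
    linarith
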